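/- Let λ₊ > 1 be a real number and λ₋ = 1/λ₊. Define ζ(m) = (λ₊^m − λ₋^m)/(λ₊ − λ₋) for m ≥ 0. Then for each fixed n ≥ 0, the limit as M → ∞ of (a² + b²·ζ(M−n−1)² + b²·ζ(M−n)²)/(∑_{k=0}^{M−1} (a² + b²·ζ(M−k−1)² + b²·ζ(M−k)²)) equals (1 − λ₊^{−2})·λ₊^{−2n}, for any reals a, b with b ≠ 0. -/

import Mathlib

open Filter

theorem stmt6 (lam : ℝ) (hlam : 1 < lam) (ζ : ℕ → ℝ)
    (hζ : ∀ m : ℕ, ζ m = (lam ^ m - lam⁻¹ ^ m) / (lam - lam⁻¹))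
    (a b : ℝ) (hb : b ≠ 0) (n : ℕ) :
    Tendsto (fun M : ℕ =>
        (a ^ 2 + b ^ 2 * (ζ (M - n - 1)) ^ 2 + b ^ 2 * (ζ (M - n)) ^ 2) /
          (∑ k ∈ Finset.range M,
            (a ^ 2 + b ^ 2 * (ζ (M - k - 1)) ^ 2 + b ^ 2 * (ζ (M - k)) ^ 2)))
      atTop (nhds ((1 - lam⁻¹ ^ 2) * lam⁻¹ ^ (2 * n))) := by
  have hl0 : (0:ℝ) < lam := lt_trans one_pos hlam
  have hlne : lam ≠ 0 := ne_of_gt hl0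
  have hinv0 : 0 < lam⁻¹ := inv_pos.mpr hl0
  have hinv1 : lam⁻¹ < 1 := inv_lt_one_of_one_lt₀ hlam
  set u : ℝ := lam ^ 2 with hu
  set r : ℝ := lam⁻¹ ^ 2 with hr
  have hur : u * r = 1 := by
    rw [hu, hr]; field_simp
  have hr0 : 0 < r := pow_pos hinv0 2
  have hr1 : r < 1 := by
    rw [hr]; nlinarith
  have hu1 : 1 < u := by rw [hu]; nlinarith
  have hune : u - 1 ≠ 0 := sub_ne_zero.mpr (ne_of_gt hu1)
  have hrne : r - 1 ≠ 0 := sub_ne_zero.mpr (ne_of_lt hr1)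
  have hd : lam - lam⁻¹ ≠ 0 := sub_ne_zero.mpr (ne_of_gt (lt_trans hinv1 hlam))
  set A : ℝ := a^2 - 4*b^2/(lam - lam⁻¹)^2 with hA
  set B : ℝ := b^2*(1+r)/(lam - lam⁻¹)^2 with hB
  set B' : ℝ := b^2*(1+u)/(lam - lam⁻¹)^2 with hB'
  have hBne : B ≠ 0 := by
    rw [hB]
    have : (0:ℝ) < b^2*(1+r) := by positivity
    positivity
  -- closed form for the summand
  have hf : ∀ j : ℕ, 1 ≤ j →
      a ^ 2 + b ^ 2 * (ζ (j - 1)) ^ 2 + b ^ 2 * (ζ j) ^ 2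
        = A + B * u ^ j + B' * r ^ j := by
    intro j hj
    obtain ⟨m, rfl⟩ := Nat.exists_eq_succ_of_ne_zero (by omega : j ≠ 0)
    have hd2 : (lam - lam⁻¹) ^ 2 ≠ 0 := pow_ne_zero _ hd
    simp only [Nat.succ_eq_add_one, Nat.add_sub_cancel]
    rw [hζ m, hζ (m+1), hA, hB, hB', hu, hr, div_pow, div_pow]
    have h0 : lam ^ m * lam⁻¹ ^ m = 1 := by
      rw [← mul_pow, mul_inv_cancel₀ hlne, one_pow]
    have h2 : lam * lam⁻¹ = 1 := mul_inv_cancel₀ hlne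
    linear_combination (b^2 * (-2 - 2*lam*lam⁻¹) / (lam - lam⁻¹)^2) * h0 +
      (b^2 * (-(((lam^m)^2 + (lam⁻¹^m)^2) * (lam*lam⁻¹+1)) - 2) / (lam - lam⁻¹)^2) * h2
  -- closed form for the sum
  have hsum : ∀ M : ℕ,
      (∑ k ∈ Finset.range M,
          (a ^ 2 + b ^ 2 * (ζ (M - k - 1)) ^ 2 + b ^ 2 * (ζ (M - k)) ^ 2))
        = M * A + B * (u * ((u ^ M - 1)/(u - 1))) + B' * (r * ((r ^ M - 1)/(r - 1))) := by
    intro M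
    have step1 : (∑ k ∈ Finset.range M,
          (a ^ 2 + b ^ 2 * (ζ (M - k - 1)) ^ 2 + b ^ 2 * (ζ (M - k)) ^ 2))
        = ∑ k ∈ Finset.range M, (A + B * u ^ (M - 1 - k + 1) + B' * r ^ (M - 1 - k + 1)) := by
      refine Finset.sum_congr rfl (fun k hk => ?_)
      have hk' : k < M := Finset.mem_range.mp hk
      have h1 : M - 1 - k + 1 = M - k := by omega
      rw [h1, hf (M - k) (by omega)]
    rw [step1, Finset.sum_range_reflect (fun j => A + B * u ^ (j+1) + B' * r ^ (j+1)) M]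
    simp only [Finset.sum_add_distrib, Finset.sum_const, Finset.card_range, nsmul_eq_mul,
      pow_succ, ← Finset.sum_mul, ← Finset.mul_sum]
    rw [geom_sum_eq (ne_of_gt hu1), geom_sum_eq (ne_of_lt hr1)]
    ring
  have hrMne : ∀ M : ℕ, (r:ℝ) ^ M ≠ 0 := fun M => pow_ne_zero M (ne_of_gt hr0)
  have huMrM : ∀ M : ℕ, u ^ M * r ^ M = 1 := by
    intro M; rw [← mul_pow, hur, one_pow]
  -- denominator limit
  have hDten : Tendsto (fun M : ℕ =>
      (∑ k ∈ Finset.range M,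
          (a ^ 2 + b ^ 2 * (ζ (M - k - 1)) ^ 2 + b ^ 2 * (ζ (M - k)) ^ 2)) * r ^ M)
      atTop (nhds (B * u / (u - 1))) := by
    have heq : ∀ M : ℕ,
        A * ((M:ℝ) * r ^ M) + (B * u / (u - 1)) * (1 - r ^ M)
          + (B' * r / (1 - r)) * (r ^ M - r ^ M * r ^ M)
        = (∑ k ∈ Finset.range M,
            (a ^ 2 + b ^ 2 * (ζ (M - k - 1)) ^ 2 + b ^ 2 * (ζ (M - k)) ^ 2)) * r ^ M := by
      intro M
      rw [hsum M]
      have h1 : u ^ M * r ^ M = 1 := huMrM M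
      have hrne' : (1:ℝ) - r ≠ 0 := sub_ne_zero.mpr (by linarith)
      have e1 : (u ^ M - 1) * r ^ M = 1 - r ^ M := by rw [sub_mul, h1, one_mul]
      have e2 : B * (u * ((u ^ M - 1) / (u - 1))) * r ^ M
          = (B * u / (u - 1)) * (1 - r ^ M) := by
        rw [← e1]; field_simp
      have e3 : B' * (r * ((r ^ M - 1) / (r - 1))) * r ^ M
          = (B' * r / (1 - r)) * (r ^ M - r ^ M * r ^ M) := by
        field_simp
        ring
      linear_combination -e2 - e3
    have hlim : Tendsto (fun M : ℕ =>
        A * ((M:ℝ) * r ^ M) + (B * u / (u - 1)) * (1 - r ^ M)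
          + (B' * r / (1 - r)) * (r ^ M - r ^ M * r ^ M)) atTop
        (nhds (A * 0 + (B * u / (u - 1)) * (1 - 0) + (B' * r / (1 - r)) * (0 - 0 * 0))) := by
      have h0 : Tendsto (fun M : ℕ => r ^ M) atTop (nhds 0) :=
        tendsto_pow_atTop_nhds_zero_of_lt_one (le_of_lt hr0) hr1
      have h1 : Tendsto (fun M : ℕ => (M:ℝ) * r ^ M) atTop (nhds 0) :=
        tendsto_self_mul_const_pow_of_lt_one (le_of_lt hr0) hr1
      exact (((tendsto_const_nhds.mul h1).add
        (tendsto_const_nhds.mul (tendsto_const_nhds.sub h0))).add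
        (tendsto_const_nhds.mul (h0.sub (h0.mul h0))))
    have : (A * 0 + (B * u / (u - 1)) * (1 - 0) + (B' * r / (1 - r)) * (0 - 0 * 0))
        = B * u / (u - 1) := by ring
    rw [this] at hlim
    exact hlim.congr heq
  -- numerator limit
  have hNten : Tendsto (fun M : ℕ =>
      (a ^ 2 + b ^ 2 * (ζ (M - n - 1)) ^ 2 + b ^ 2 * (ζ (M - n)) ^ 2) * r ^ M)
      atTop (nhds (B * r ^ n)) := by
    have heq : ∀ᶠ M : ℕ in atTop,
        A * r ^ M + B * r ^ n + (B' * u ^ n) * (r ^ M * r ^ M)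
        = (a ^ 2 + b ^ 2 * (ζ (M - n - 1)) ^ 2 + b ^ 2 * (ζ (M - n)) ^ 2) * r ^ M := by
      filter_upwards [eventually_ge_atTop (n+1)] with M hM
      rw [hf (M - n) (by omega)]
      have h1 : r ^ M = r ^ (M - n) * r ^ n := by rw [← pow_add]; congr 1; omega
      have h2 : u ^ (M - n) * r ^ M = r ^ n := by
        rw [h1, ← mul_assoc, ← mul_pow, hur, one_pow, one_mul]
      have h3 : r ^ (M - n) * r ^ M = u ^ n * (r ^ M * r ^ M) := by
        have h4 : r ^ (M - n) = r ^ M * u ^ n := by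
          rw [h1, mul_assoc, ← mul_pow, mul_comm r u, hur, one_pow, mul_one]
        rw [h4]; ring
      calc A * r ^ M + B * r ^ n + (B' * u ^ n) * (r ^ M * r ^ M)
          = A * r ^ M + B * (u ^ (M-n) * r ^ M) + B' * (r ^ (M-n) * r ^ M) := by
            rw [h2, h3]; ring
        _ = (A + B * u ^ (M - n) + B' * r ^ (M - n)) * r ^ M := by ring
    have h0 : Tendsto (fun M : ℕ => r ^ M) atTop (nhds 0) :=
      tendsto_pow_atTop_nhds_zero_of_lt_one (le_of_lt hr0) hr1
    have hlim : Tendsto (fun M : ℕ =>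
        A * r ^ M + B * r ^ n + (B' * u ^ n) * (r ^ M * r ^ M)) atTop
        (nhds (A * 0 + B * r ^ n + (B' * u ^ n) * (0 * 0))) :=
      ((tendsto_const_nhds.mul h0).add tendsto_const_nhds).add
        (tendsto_const_nhds.mul (h0.mul h0))
    have hval : (A * 0 + B * r ^ n + (B' * u ^ n) * ((0:ℝ) * 0)) = B * r ^ n := by ring
    rw [hval] at hlim
    exact Tendsto.congr' heq hlim
  have hDne : B * u / (u - 1) ≠ 0 := by
    have hu0 : u ≠ 0 := by positivity
    exact div_ne_zero (mul_ne_zero hBne hu0) hune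
  have hfinal := hNten.div hDten hDne
  have hval : (B * r ^ n) / (B * u / (u - 1)) = (1 - lam⁻¹ ^ 2) * lam⁻¹ ^ (2 * n) := by
    have h1 : lam⁻¹ ^ (2 * n) = r ^ n := by rw [hr, ← pow_mul, mul_comm]
    rw [h1, ← hr]
    have hu0 : u ≠ 0 := by positivity
    have key : u * (1 - r) = u - 1 := by rw [mul_sub, mul_one, hur]
    rw [div_eq_iff hDne]
    rw [mul_div_assoc', eq_div_iff hune]
    linear_combination (-(B * r ^ n)) * key
  rw [← hval]
  refine hfinal.congr (fun M => ?_)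
  simp only [Pi.div_apply]
  rw [mul_div_mul_right _ _ (hrMne M)]
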